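/- Let S = {s_1, …, s_n} be a finite set, k a positive integer with 2 ≤ k ≤ n, f : 2^S → ℝ a k-distant submodular function with f(∅) = 0, and w ∈ ℝ_+^S a nonnegative weight vector with w(s_1) ≥ w(s_2) ≥ ⋯ ≥ w(s_n). Set S_0 = ∅, S_i = {s_1, …, s_i} for 1 ≤ i ≤ n, and 𝒞 = {S_i Δ T : 0 ≤ i ≤ n, T ⊆ S, |T| ≤ k−2}. Then for every vector y : 2^S → ℝ_+ with ∑_{T ⊆ S} y_T χ_T = w (where χ_T ∈ {0,1}^S is the characteristic vector of T), there exists a vector y' : 2^S → ℝ_+ with ∑_{T ⊆ S} y'_T χ_T = w, whose support {T : y'_T > 0} is contained in 𝒞, and with ∑_{T ⊆ S} y'_T f(T) ≤ ∑_{T ⊆ S} y_T f(T). -/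
import Mathlib


open scoped symmDiff

/-- A set function `f` on subsets of a finite type is `k`-distant submodular if the
submodular inequality holds for every pair whose symmetric difference has size at least `k`. -/
def DistantSubmodular {α : Type*} [DecidableEq α] (k : ℕ) (f : Finset α → ℝ) : Prop :=
  ∀ X Y : Finset α, k ≤ (X ∆ Y).card → f (X ∪ Y) + f (X ∩ Y) ≤ f X + f Y

/-- `initSeg n i = S_i = {s_1, …, s_i}`, the first `i` elements of `Fin n`. -/
def initSeg (n : ℕ) (i : ℕ) : Finset (Fin n) :=
  Finset.univ.filter (fun j : Fin n => (j : ℕ) < i)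

namespace DSAux

variable {n : ℕ}

lemma mem_initSeg {j : Fin n} {i : ℕ} : j ∈ initSeg n i ↔ (j : ℕ) < i := by
  simp [initSeg]

lemma initSeg_mono {i i' : ℕ} (h : i ≤ i') : initSeg n i ⊆ initSeg n i' := by
  intro j hj; rw [mem_initSeg] at *; omega

lemma initSeg_zero : initSeg n 0 = ∅ := by
  ext j; simp [mem_initSeg]

lemma subset_initSeg_n (X : Finset (Fin n)) : X ⊆ initSeg n n := by
  intro j _; rw [mem_initSeg]; exact j.isLt

lemma initSeg_succ {i : ℕ} (h : i < n) :
    initSeg n (i + 1) = insert ⟨i, h⟩ (initSeg n i) := by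
  ext j
  simp only [mem_initSeg, Finset.mem_insert, Fin.ext_iff, Fin.val_mk]
  omega

lemma self_notMem_initSeg {i : ℕ} (h : i < n) : (⟨i, h⟩ : Fin n) ∉ initSeg n i := by
  rw [mem_initSeg]; simp

lemma card_initSeg {i : ℕ} (h : i ≤ n) : (initSeg n i).card = i := by
  induction i with
  | zero => simp [initSeg_zero]
  | succ m ih =>
      rw [initSeg_succ (by omega), Finset.card_insert_of_notMem (self_notMem_initSeg _)]
      rw [ih (by omega)]

lemma symmDiff_insert_of_mem {α : Type*} [DecidableEq α] {X S : Finset α} {u : α}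
    (hu : u ∈ X) (hS : u ∉ S) : X ∆ (insert u S) = (X ∆ S).erase u := by
  ext j
  by_cases hj : j = u
  · subst hj; simp [Finset.mem_symmDiff, hu, hS]
  · simp [Finset.mem_symmDiff, hj, Finset.mem_insert]

lemma symmDiff_insert_of_notMem {α : Type*} [DecidableEq α] {X S : Finset α} {u : α}
    (hu : u ∉ X) (hS : u ∉ S) : X ∆ (insert u S) = insert u (X ∆ S) := by
  ext j
  by_cases hj : j = u
  · subst hj; simp [Finset.mem_symmDiff, hu, hS]
  · simp [Finset.mem_symmDiff, hj, Finset.mem_insert]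

/-- `dd X i = |X ∆ S_i|`. -/
def dd (X : Finset (Fin n)) (i : ℕ) : ℕ := (X ∆ initSeg n i).card

lemma dd_succ_mem' {X : Finset (Fin n)} {i : ℕ} (h : i < n) (hm : (⟨i, h⟩ : Fin n) ∈ X) :
    dd X (i + 1) + 1 = dd X i := by
  have hu : (⟨i, h⟩ : Fin n) ∈ X ∆ initSeg n i :=
    Finset.mem_symmDiff.2 (Or.inl ⟨hm, self_notMem_initSeg h⟩)
  rw [dd, dd, initSeg_succ h, symmDiff_insert_of_mem hm (self_notMem_initSeg h),
    Finset.card_erase_of_mem hu]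
  have : 0 < (X ∆ initSeg n i).card := Finset.card_pos.2 ⟨_, hu⟩
  omega

lemma dd_succ_notMem' {X : Finset (Fin n)} {i : ℕ} (h : i < n) (hm : (⟨i, h⟩ : Fin n) ∉ X) :
    dd X (i + 1) = dd X i + 1 := by
  rw [dd, dd, initSeg_succ h, symmDiff_insert_of_notMem hm (self_notMem_initSeg h),
    Finset.card_insert_of_notMem]
  simp [Finset.mem_symmDiff, hm, self_notMem_initSeg h]

lemma dd_succ_mem {X : Finset (Fin n)} {j : Fin n} (hm : j ∈ X) :
    dd X ((j : ℕ) + 1) + 1 = dd X (j : ℕ) :=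
  dd_succ_mem' j.isLt (by rwa [Fin.eta])

lemma dd_succ_notMem {X : Finset (Fin n)} {j : Fin n} (hm : j ∉ X) :
    dd X ((j : ℕ) + 1) = dd X (j : ℕ) + 1 :=
  dd_succ_notMem' j.isLt (by rwa [Fin.eta])

/-- the dual certificate. -/
noncomputable def lam (k : ℕ) (X : Finset (Fin n)) (i : ℕ) : ℝ :=
  if initSeg n i ⊆ X ∨ X ⊆ initSeg n i then 0 else (dd X i : ℝ) - ((k : ℝ) - 1)

def ell (X : Finset (Fin n)) : ℕ := Nat.findGreatest (fun i => initSeg n i ⊆ X) n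

noncomputable def rr (X : Finset (Fin n)) : ℕ :=
  Nat.find (⟨n, subset_initSeg_n X⟩ : ∃ i, X ⊆ initSeg n i)

lemma ell_le (X : Finset (Fin n)) : ell X ≤ n := Nat.findGreatest_le n

lemma initSeg_ell_subset (X : Finset (Fin n)) : initSeg n (ell X) ⊆ X := by
  rcases Nat.eq_zero_or_pos (ell X) with h | h
  · rw [h, initSeg_zero]; exact Finset.empty_subset _
  · exact Nat.findGreatest_spec (P := fun i => initSeg n i ⊆ X) (Nat.zero_le n)
      (show initSeg n 0 ⊆ X by rw [initSeg_zero]; exact Finset.empty_subset _)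

lemma subset_of_le_ell {X : Finset (Fin n)} {i : ℕ} (h : i ≤ ell X) : initSeg n i ⊆ X :=
  (initSeg_mono h).trans (initSeg_ell_subset X)

lemma le_ell_of_subset {X : Finset (Fin n)} {i : ℕ} (hin : i ≤ n) (h : initSeg n i ⊆ X) :
    i ≤ ell X := Nat.le_findGreatest hin h

lemma rr_le (X : Finset (Fin n)) : rr X ≤ n := by exact Nat.find_min' (⟨n, subset_initSeg_n X⟩ : ∃ i, X ⊆ initSeg n i) (subset_initSeg_n X)

lemma subset_rr (X : Finset (Fin n)) : X ⊆ initSeg n (rr X) := by exact Nat.find_spec (⟨n, subset_initSeg_n X⟩ : ∃ i, X ⊆ initSeg n i)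

lemma rr_le_of_subset {X : Finset (Fin n)} {i : ℕ} (h : X ⊆ initSeg n i) : rr X ≤ i := by
  exact Nat.find_min' (⟨n, subset_initSeg_n X⟩ : ∃ i, X ⊆ initSeg n i) h

lemma mem_val_lt_rr {X : Finset (Fin n)} {j : Fin n} (hj : j ∈ X) : (j : ℕ) < rr X :=
  mem_initSeg.1 (subset_rr X hj)

lemma mem_of_val_lt_ell {X : Finset (Fin n)} {j : Fin n} (hj : (j : ℕ) < ell X) : j ∈ X :=
  initSeg_ell_subset X (mem_initSeg.2 hj)

lemma ell_notMem {X : Finset (Fin n)} (h : ell X < n) : (⟨ell X, h⟩ : Fin n) ∉ X := by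
  intro hmem
  have hsub : initSeg n (ell X + 1) ⊆ X := by
    rw [initSeg_succ h]
    exact Finset.insert_subset hmem (initSeg_ell_subset X)
  have := le_ell_of_subset (by omega) hsub
  omega

end DSAux

namespace DSAux

variable {n : ℕ}

lemma cast_bad {k : ℕ} {X : Finset (Fin n)} (hk2 : 2 ≤ k)
    (hbad : ∀ i ≤ n, k - 1 ≤ dd X i) {i : ℕ} (h : i ≤ n) :
    (k : ℝ) - 1 ≤ (dd X i : ℝ) := by
  have h' : ((k - 1 : ℕ) : ℝ) ≤ (dd X i : ℝ) := Nat.cast_le.2 (hbad i h)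
  rwa [Nat.cast_sub (by omega : 1 ≤ k), Nat.cast_one] at h'

lemma lam_nonneg {k : ℕ} {X : Finset (Fin n)} (hk2 : 2 ≤ k)
    (hbad : ∀ i ≤ n, k - 1 ≤ dd X i) {i : ℕ} (h : i ≤ n) : 0 ≤ lam k X i := by
  rw [lam]; split
  · exact le_refl 0
  · linarith [cast_bad hk2 hbad h]

lemma lam_le_dd {k : ℕ} {X : Finset (Fin n)} (hk2 : 2 ≤ k)
    (hbad : ∀ i ≤ n, k - 1 ≤ dd X i) {i : ℕ} (h : i ≤ n) :
    lam k X i ≤ (dd X i : ℝ) - ((k : ℝ) - 1) := by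
  rw [lam]; split
  · linarith [cast_bad hk2 hbad h]
  · exact le_refl _

lemma lam_zero (k : ℕ) (X : Finset (Fin n)) : lam k X 0 = 0 := by
  rw [lam, if_pos (Or.inl (by rw [initSeg_zero]; exact Finset.empty_subset X))]

lemma lam_top (k : ℕ) (X : Finset (Fin n)) : lam k X n = 0 := by
  rw [lam, if_pos (Or.inr (subset_initSeg_n X))]

lemma lam_eq {k : ℕ} {X : Finset (Fin n)} {i : ℕ} (hl : ell X < i) (hr : i < rr X) :
    lam k X i = (dd X i : ℝ) - ((k : ℝ) - 1) := by
  rw [lam, if_neg]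
  rintro (h | h)
  · have : i ≤ ell X := le_ell_of_subset (le_trans (le_of_lt hr) (rr_le X)) h
    omega
  · have : rr X ≤ i := rr_le_of_subset h
    omega

lemma ell_add_two_le_rr {k : ℕ} {X : Finset (Fin n)} (hk2 : 2 ≤ k)
    (hbad : ∀ i ≤ n, k - 1 ≤ dd X i) : ell X + 2 ≤ rr X := by
  have hsub : ¬ X ⊆ initSeg n (ell X) := by
    intro h
    have heq : X = initSeg n (ell X) := Finset.Subset.antisymm h (initSeg_ell_subset X)
    have hd : dd X (ell X) = 0 := by
      rw [dd, ← heq, symmDiff_self]; simp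
    have := hbad (ell X) (ell_le X); omega
  by_contra hc
  push_neg at hc
  rcases Nat.lt_or_ge (rr X) (ell X + 1) with h | h
  · exact hsub ((subset_rr X).trans (initSeg_mono (by omega)))
  · have hn : ell X < n := by have := rr_le X; omega
    apply hsub
    intro j hj
    have hjv := mem_initSeg.1 (subset_rr X hj)
    rw [mem_initSeg]
    have hne : (j : ℕ) ≠ ell X := by
      intro he
      exact ell_notMem hn (by rwa [show (⟨ell X, hn⟩ : Fin n) = j from Fin.ext he.symm])
    omega

lemma step_mem {k : ℕ} {X : Finset (Fin n)} (hk2 : 2 ≤ k)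
    (hbad : ∀ i ≤ n, k - 1 ≤ dd X i) {j : Fin n} (hj : j ∈ X) :
    lam k X ((j : ℕ) + 1) ≤ lam k X (j : ℕ) := by
  by_cases hcomp : initSeg n (j : ℕ) ⊆ X ∨ X ⊆ initSeg n (j : ℕ)
  · have h0 : lam k X (j : ℕ) = 0 := by rw [lam, if_pos hcomp]
    have h1 : lam k X ((j : ℕ) + 1) = 0 := by
      rw [lam, if_pos]
      rcases hcomp with h | h
      · refine Or.inl ?_
        rw [initSeg_succ j.isLt]
        exact Finset.insert_subset (by rwa [Fin.eta]) h
      · exact Or.inr (h.trans (initSeg_mono (Nat.le_succ _)))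
    rw [h0, h1]
  · have h0 : lam k X (j : ℕ) = (dd X (j : ℕ) : ℝ) - ((k : ℝ) - 1) := by rw [lam, if_neg hcomp]
    have h1 := lam_le_dd hk2 hbad (show (j : ℕ) + 1 ≤ n from j.isLt)
    have h2 : (dd X ((j : ℕ) + 1) : ℝ) + 1 = (dd X (j : ℕ) : ℝ) := by
      exact_mod_cast congrArg (fun m : ℕ => (m : ℝ)) (dd_succ_mem hj)
    rw [h0]; linarith

lemma step_not_mem {k : ℕ} {X : Finset (Fin n)} (hk2 : 2 ≤ k)
    (hbad : ∀ i ≤ n, k - 1 ≤ dd X i) {j : Fin n} (hj : j ∉ X) :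
    lam k X (j : ℕ) ≤ lam k X ((j : ℕ) + 1) := by
  by_cases hcomp : initSeg n ((j : ℕ) + 1) ⊆ X ∨ X ⊆ initSeg n ((j : ℕ) + 1)
  · rcases hcomp with h | h
    · exact absurd (h (mem_initSeg.2 (Nat.lt_succ_self _))) hj
    · have h1 : lam k X ((j : ℕ) + 1) = 0 := by rw [lam, if_pos (Or.inr h)]
      have h0 : lam k X (j : ℕ) = 0 := by
        rw [lam, if_pos]
        refine Or.inr (fun i hi => ?_)
        have h2 := mem_initSeg.1 (h hi)
        rw [mem_initSeg]
        have : i ≠ j := fun he => hj (he ▸ hi)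
        have : (i : ℕ) ≠ (j : ℕ) := fun hv => this (Fin.ext hv)
        omega
      rw [h0, h1]
  · have h1 : lam k X ((j : ℕ) + 1) = (dd X ((j : ℕ) + 1) : ℝ) - ((k : ℝ) - 1) := by
      rw [lam, if_neg hcomp]
    have h0 := lam_le_dd hk2 hbad (le_of_lt j.isLt)
    have h2 : (dd X ((j : ℕ) + 1) : ℝ) = (dd X (j : ℕ) : ℝ) + 1 := by
      exact_mod_cast congrArg (fun m : ℕ => (m : ℝ)) (dd_succ_notMem hj)
    rw [h1, h2]; linarith

lemma step_strict {k : ℕ} {X : Finset (Fin n)} (hk2 : 2 ≤ k)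
    (hbad : ∀ i ≤ n, k - 1 ≤ dd X i) {j : Fin n} (hj : j ∈ X) (hl : ell X < (j : ℕ)) :
    lam k X ((j : ℕ) + 1) ≤ lam k X (j : ℕ) - 1 := by
  have hr : (j : ℕ) < rr X := mem_val_lt_rr hj
  rw [lam_eq hl hr]
  have h1 := lam_le_dd hk2 hbad (show (j : ℕ) + 1 ≤ n from j.isLt)
  have h2 : (dd X ((j : ℕ) + 1) : ℝ) + 1 = (dd X (j : ℕ) : ℝ) := by
    exact_mod_cast congrArg (fun m : ℕ => (m : ℝ)) (dd_succ_mem hj)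
  linarith

lemma step_le_one {k : ℕ} {X : Finset (Fin n)} (hk2 : 2 ≤ k)
    (hbad : ∀ i ≤ n, k - 1 ≤ dd X i) {j : Fin n} (hj : j ∉ X) (hne : (j : ℕ) ≠ ell X) :
    lam k X ((j : ℕ) + 1) ≤ lam k X (j : ℕ) + 1 := by
  by_cases hXsub : X ⊆ initSeg n (j : ℕ)
  · have h0 : lam k X (j : ℕ) = 0 := by rw [lam, if_pos (Or.inr hXsub)]
    have h1 : lam k X ((j : ℕ) + 1) = 0 := by
      rw [lam, if_pos (Or.inr (hXsub.trans (initSeg_mono (Nat.le_succ _))))]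
    rw [h0, h1]; norm_num
  · by_cases hSsub : initSeg n (j : ℕ) ⊆ X
    · have h2 : (j : ℕ) ≤ ell X := le_ell_of_subset (le_of_lt j.isLt) hSsub
      have h3 : (j : ℕ) < ell X := lt_of_le_of_ne h2 hne
      exact absurd (mem_of_val_lt_ell h3) hj
    · have h0 : lam k X (j : ℕ) = (dd X (j : ℕ) : ℝ) - ((k : ℝ) - 1) := by
        rw [lam, if_neg (by rintro (h | h); exact hSsub h; exact hXsub h)]
      have h1 := lam_le_dd hk2 hbad (le_of_lt j.isLt)
      have h2 : (dd X ((j : ℕ) + 1) : ℝ) = (dd X (j : ℕ) : ℝ) + 1 := by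
        exact_mod_cast congrArg (fun m : ℕ => (m : ℝ)) (dd_succ_notMem hj)
      have h3 := lam_le_dd hk2 hbad (show (j : ℕ) + 1 ≤ n from j.isLt)
      rw [h0]; linarith

end DSAux

namespace DSAux

variable {n : ℕ}

/-- `Lam k X Y = ∑_{j ∈ Y} (lam (j+1) - lam j)`. -/
noncomputable def Lam (k : ℕ) (X Y : Finset (Fin n)) : ℝ :=
  ∑ j ∈ Y, (lam k X ((j : ℕ) + 1) - lam k X (j : ℕ))

lemma sum_step (k : ℕ) (X : Finset (Fin n)) :
    ∑ j : Fin n, (lam k X ((j : ℕ) + 1) - lam k X (j : ℕ)) = 0 := by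
  rw [Fin.sum_univ_eq_sum_range (fun i => lam k X (i + 1) - lam k X i) n,
    Finset.sum_range_sub (fun i => lam k X i), lam_top, lam_zero, sub_zero]

lemma Lam_subset {k : ℕ} {X Y : Finset (Fin n)} (hk2 : 2 ≤ k)
    (hbad : ∀ i ≤ n, k - 1 ≤ dd X i) (hYX : Y ⊆ X) : Lam k X Y ≤ 0 :=
  Finset.sum_nonpos fun j hj => sub_nonpos.2 (step_mem hk2 hbad (hYX hj))

lemma Lam_superset {k : ℕ} {X Y : Finset (Fin n)} (hk2 : 2 ≤ k)
    (hbad : ∀ i ≤ n, k - 1 ≤ dd X i) (hXY : X ⊆ Y) : Lam k X Y ≤ 0 := by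
  have hsplit : Lam k X Y + ∑ j ∈ Yᶜ, (lam k X ((j : ℕ) + 1) - lam k X (j : ℕ)) = 0 := by
    rw [Lam, Finset.sum_add_sum_compl, sum_step]
  have hpos : 0 ≤ ∑ j ∈ Yᶜ, (lam k X ((j : ℕ) + 1) - lam k X (j : ℕ)) :=
    Finset.sum_nonneg fun j hj =>
      sub_nonneg.2 (step_not_mem hk2 hbad fun hjX => (Finset.mem_compl.1 hj) (hXY hjX))
  linarith

lemma card_symmDiff_eq (X Y : Finset (Fin n)) :
    (X ∆ Y).card = (X \ Y).card + (Y \ X).card := by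
  rw [show X ∆ Y = (X \ Y) ∪ (Y \ X) by
        ext j; simp [Finset.mem_symmDiff, Finset.mem_union, Finset.mem_sdiff]]
  exact Finset.card_union_of_disjoint disjoint_sdiff_sdiff

lemma counting {k : ℕ} {X : Finset (Fin n)} (hk2 : 2 ≤ k)
    (hbad : ∀ i ≤ n, k - 1 ≤ dd X i) (hln : ell X < n) (Y : Finset (Fin n)) :
    dd X (ell X) ≤ ((Y ∩ X).filter (fun j : Fin n => ell X < (j : ℕ))).card + (X \ Y).card := by
  have hfX : X.filter (fun j : Fin n => ell X < (j : ℕ)) = X \ initSeg n (ell X) := by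
    ext j
    simp only [Finset.mem_filter, Finset.mem_sdiff, mem_initSeg, not_lt]
    constructor
    · rintro ⟨h1, h2⟩; exact ⟨h1, by omega⟩
    · rintro ⟨h1, h2⟩
      refine ⟨h1, ?_⟩
      rcases Nat.lt_or_ge (ell X) (j : ℕ) with h | h
      · exact h
      · exfalso
        have hje : (⟨ell X, hln⟩ : Fin n) = j := Fin.ext (by simp only [Fin.val_mk]; omega)
        exact ell_notMem hln (hje ▸ h1)
  have hcard : (X \ initSeg n (ell X)).card = dd X (ell X) := by
    rw [dd]
    congr 1
    ext j
    simp only [Finset.mem_sdiff, Finset.mem_symmDiff]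
    constructor
    · rintro ⟨h1, h2⟩; exact Or.inl ⟨h1, h2⟩
    · rintro (⟨h1, h2⟩ | ⟨h1, h2⟩)
      · exact ⟨h1, h2⟩
      · exact absurd (initSeg_ell_subset X h1) h2
  have hsub : X.filter (fun j : Fin n => ell X < (j : ℕ)) ⊆
      ((Y ∩ X).filter (fun j : Fin n => ell X < (j : ℕ))) ∪ (X \ Y) := by
    intro j hj
    rw [Finset.mem_filter] at hj
    by_cases hjY : j ∈ Y
    · exact Finset.mem_union_left _ (Finset.mem_filter.2 ⟨Finset.mem_inter.2 ⟨hjY, hj.1⟩, hj.2⟩)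
    · exact Finset.mem_union_right _ (Finset.mem_sdiff.2 ⟨hj.1, hjY⟩)
  calc dd X (ell X) = (X.filter (fun j : Fin n => ell X < (j : ℕ))).card := by rw [hfX, hcard]
    _ ≤ (((Y ∩ X).filter (fun j : Fin n => ell X < (j : ℕ))) ∪ (X \ Y)).card := Finset.card_le_card hsub
    _ ≤ _ := Finset.card_union_le _ _

end DSAux

namespace DSAux

variable {n : ℕ}

lemma rr_sub_one_mem {X : Finset (Fin n)} (hpos : 0 < rr X) (h : rr X - 1 < n) :
    (⟨rr X - 1, h⟩ : Fin n) ∈ X := by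
  by_contra h'
  have hsub : X ⊆ initSeg n (rr X - 1) := by
    intro i hi
    have h1 := mem_val_lt_rr hi
    rw [mem_initSeg]
    have : (i : ℕ) ≠ rr X - 1 := by
      intro he
      exact h' (by rwa [show (⟨rr X - 1, h⟩ : Fin n) = i from Fin.ext (by simp only [Fin.val_mk]; omega)])
    omega
  have := rr_le_of_subset hsub
  omega

lemma Lam_self {k : ℕ} {X : Finset (Fin n)} (hk2 : 2 ≤ k)
    (hbad : ∀ i ≤ n, k - 1 ≤ dd X i) : Lam k X X ≤ -1 := by
  have hlr := ell_add_two_le_rr hk2 hbad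
  have hrn := rr_le X
  have hr1n : rr X - 1 < n := by omega
  set js : Fin n := ⟨rr X - 1, hr1n⟩ with hjs
  have hjmem : js ∈ X := rr_sub_one_mem (by omega) hr1n
  have hjell : ell X < (js : ℕ) := by simp only [hjs, Fin.val_mk]; omega
  have hstep : lam k X ((js : ℕ) + 1) - lam k X (js : ℕ) ≤ -1 := by
    have := step_strict hk2 hbad hjmem hjell
    linarith
  have hrest : ∑ j ∈ X.erase js, (lam k X ((j : ℕ) + 1) - lam k X (j : ℕ)) ≤ 0 :=
    Finset.sum_nonpos fun j hj =>
      sub_nonpos.2 (step_mem hk2 hbad (Finset.mem_of_mem_erase hj))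
  have hsplit : Lam k X X = (lam k X ((js : ℕ) + 1) - lam k X (js : ℕ)) +
      ∑ j ∈ X.erase js, (lam k X ((j : ℕ) + 1) - lam k X (j : ℕ)) := by
    rw [Lam, ← Finset.add_sum_erase X _ hjmem]
  rw [hsplit]
  linarith

lemma Lam_close {k : ℕ} {X Y : Finset (Fin n)} (hk2 : 2 ≤ k)
    (hbad : ∀ i ≤ n, k - 1 ≤ dd X i) (hsd : (X ∆ Y).card ≤ k - 1) : Lam k X Y ≤ 0 := by
  have hlr := ell_add_two_le_rr hk2 hbad
  have hrn := rr_le X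
  have hln : ell X < n := by omega
  have hulX : (⟨ell X, hln⟩ : Fin n) ∉ X := ell_notMem hln
  have hcount := counting hk2 hbad hln Y
  have habk : (X \ Y).card + (Y \ X).card ≤ k - 1 := by
    rw [← card_symmDiff_eq]; exact hsd
  have hDk : (k : ℝ) - 1 ≤ (dd X (ell X) : ℝ) := cast_bad hk2 hbad (by omega)
  have hcastc : (dd X (ell X) : ℝ) ≤
      (((Y ∩ X).filter (fun j : Fin n => ell X < (j : ℕ))).card : ℝ) + ((X \ Y).card : ℝ) := by
    exact_mod_cast hcount
  have hcastk : ((X \ Y).card : ℝ) + ((Y \ X).card : ℝ) ≤ (k : ℝ) - 1 := by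
    have h0 : (((X \ Y).card + (Y \ X).card : ℕ) : ℝ) ≤ ((k - 1 : ℕ) : ℝ) := Nat.cast_le.2 habk
    rwa [Nat.cast_add, Nat.cast_sub (by omega : 1 ≤ k), Nat.cast_one] at h0
  have hsplit : Lam k X Y = (∑ j ∈ Y ∩ X, (lam k X ((j : ℕ) + 1) - lam k X (j : ℕ))) +
      (∑ j ∈ Y \ X, (lam k X ((j : ℕ) + 1) - lam k X (j : ℕ))) := by
    rw [Lam, ← Finset.sum_inter_add_sum_sdiff Y X _]
  have hb1 : (∑ j ∈ Y ∩ X, (lam k X ((j : ℕ) + 1) - lam k X (j : ℕ))) ≤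
      -((((Y ∩ X).filter (fun j : Fin n => ell X < (j : ℕ))).card : ℝ)) := by
    have h1 : ∑ j ∈ (Y ∩ X).filter (fun j : Fin n => ell X < (j : ℕ)),
        (lam k X ((j : ℕ) + 1) - lam k X (j : ℕ)) ≤
        (((Y ∩ X).filter (fun j : Fin n => ell X < (j : ℕ))).card : ℝ) * (-1 : ℝ) := by
      have := Finset.sum_le_card_nsmul ((Y ∩ X).filter (fun j : Fin n => ell X < (j : ℕ)))
        (fun j : Fin n => lam k X ((j : ℕ) + 1) - lam k X (j : ℕ)) (-1 : ℝ) (fun j hj => by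
          show lam k X ((j : ℕ) + 1) - lam k X (j : ℕ) ≤ -1
          rw [Finset.mem_filter, Finset.mem_inter] at hj
          have := step_strict hk2 hbad hj.1.2 hj.2
          linarith)
      rwa [nsmul_eq_mul] at this
    have h2 : ∑ j ∈ (Y ∩ X).filter (fun j : Fin n => ¬ ell X < (j : ℕ)),
        (lam k X ((j : ℕ) + 1) - lam k X (j : ℕ)) ≤ 0 := by
      refine Finset.sum_nonpos fun j hj => ?_
      rw [Finset.mem_filter, Finset.mem_inter] at hj
      exact sub_nonpos.2 (step_mem hk2 hbad hj.1.2)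
    have h3 := Finset.sum_filter_add_sum_filter_not (Y ∩ X)
      (fun j : Fin n => ell X < (j : ℕ))
      (fun j : Fin n => lam k X ((j : ℕ) + 1) - lam k X (j : ℕ))
    rw [← h3]
    linarith
  by_cases hulY : (⟨ell X, hln⟩ : Fin n) ∈ Y
  · have hulYX : (⟨ell X, hln⟩ : Fin n) ∈ Y \ X := Finset.mem_sdiff.2 ⟨hulY, hulX⟩
    have hbe1 : 0 < (Y \ X).card := Finset.card_pos.2 ⟨_, hulYX⟩
    have hstepul : lam k X (((⟨ell X, hln⟩ : Fin n) : ℕ) + 1) -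
        lam k X ((⟨ell X, hln⟩ : Fin n) : ℕ) ≤ (dd X (ell X) : ℝ) + 1 - ((k : ℝ) - 1) := by
      have h1 : lam k X (ell X) = 0 := by
        rw [lam, if_pos (Or.inl (initSeg_ell_subset X))]
      have h2 := lam_le_dd hk2 hbad (show ell X + 1 ≤ n by omega)
      have h3 : (dd X (ell X + 1) : ℝ) = (dd X (ell X) : ℝ) + 1 := by
        exact_mod_cast congrArg (fun m : ℕ => (m : ℝ)) (dd_succ_notMem' hln (ell_notMem hln))
      simp only [Fin.val_mk]
      rw [h1, sub_zero]
      linarith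
    have hrest : ∑ j ∈ (Y \ X).erase ⟨ell X, hln⟩,
        (lam k X ((j : ℕ) + 1) - lam k X (j : ℕ)) ≤
        ((((Y \ X).erase ⟨ell X, hln⟩).card : ℕ) : ℝ) := by
      have h1 := Finset.sum_le_card_nsmul ((Y \ X).erase ⟨ell X, hln⟩)
        (fun j : Fin n => lam k X ((j : ℕ) + 1) - lam k X (j : ℕ)) (1 : ℝ) (fun j hj => by
          show lam k X ((j : ℕ) + 1) - lam k X (j : ℕ) ≤ 1
          have hj1 := Finset.mem_of_mem_erase hj
          rw [Finset.mem_sdiff] at hj1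
          have hjne : (j : ℕ) ≠ ell X := by
            intro he
            exact (Finset.ne_of_mem_erase hj) (Fin.ext (by simp only [Fin.val_mk]; omega))
          have := step_le_one hk2 hbad hj1.2 hjne
          linarith)
      rwa [nsmul_eq_mul, mul_one] at h1
    have hcard : ((((Y \ X).erase ⟨ell X, hln⟩).card : ℕ) : ℝ) = ((Y \ X).card : ℝ) - 1 := by
      rw [Finset.card_erase_of_mem hulYX]
      push_cast [Nat.cast_sub hbe1]
      ring
    have hsplit2 : (∑ j ∈ Y \ X, (lam k X ((j : ℕ) + 1) - lam k X (j : ℕ))) =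
        (lam k X (((⟨ell X, hln⟩ : Fin n) : ℕ) + 1) - lam k X ((⟨ell X, hln⟩ : Fin n) : ℕ)) +
        ∑ j ∈ (Y \ X).erase ⟨ell X, hln⟩, (lam k X ((j : ℕ) + 1) - lam k X (j : ℕ)) := by
      rw [← Finset.add_sum_erase _ _ hulYX]
    rw [hsplit, hsplit2]
    rw [hcard] at hrest
    linarith
  · have hb2 : (∑ j ∈ Y \ X, (lam k X ((j : ℕ) + 1) - lam k X (j : ℕ))) ≤
        ((Y \ X).card : ℝ) := by
      have h1 := Finset.sum_le_card_nsmul (Y \ X)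
        (fun j : Fin n => lam k X ((j : ℕ) + 1) - lam k X (j : ℕ)) (1 : ℝ) (fun j hj => by
          show lam k X ((j : ℕ) + 1) - lam k X (j : ℕ) ≤ 1
          rw [Finset.mem_sdiff] at hj
          have hjne : (j : ℕ) ≠ ell X := by
            intro he
            exact hulY (by
              rw [show (⟨ell X, hln⟩ : Fin n) = j from
                Fin.ext (by simp only [Fin.val_mk]; omega)]
              exact hj.1)
          have := step_le_one hk2 hbad hj.2 hjne
          linarith)
      rwa [nsmul_eq_mul, mul_one] at h1
    rw [hsplit]
    linarith

end DSAux

namespace DSAux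

variable {n : ℕ}

lemma support_good {k : ℕ} (hk2 : 2 ≤ k)
    (w : Fin n → ℝ) (hw_nonneg : ∀ s, 0 ≤ w s)
    (hw_mono : ∀ i j : Fin n, i ≤ j → w j ≤ w i)
    (x : Finset (Fin n) → ℝ) (hx_nonneg : ∀ T, 0 ≤ x T)
    (hx_feas : ∀ s : Fin n, ∑ T : Finset (Fin n), x T * (if s ∈ T then 1 else 0) = w s)
    (X : Finset (Fin n)) (hX : 0 < x X)
    (hcompat : ∀ Y, 0 < x Y → Y ⊆ X ∨ X ⊆ Y ∨ (X ∆ Y).card ≤ k - 1) :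
    ∃ i ≤ n, (X ∆ initSeg n i).card ≤ k - 2 := by
  by_contra hc
  push_neg at hc
  have hbad : ∀ i ≤ n, k - 1 ≤ dd X i := by
    intro i hi
    have := hc i hi
    rw [dd]
    omega
  -- the master quantity
  set A : ℝ := ∑ Y : Finset (Fin n), x Y * Lam k X Y with hA
  -- Step 1 : A = ∑_j (lam (j+1) - lam j) * w j
  have hA1 : A = ∑ j : Fin n, (lam k X ((j : ℕ) + 1) - lam k X (j : ℕ)) * w j := by
    have hLam : ∀ Y : Finset (Fin n), Lam k X Y =
        ∑ j : Fin n, (if j ∈ Y then lam k X ((j : ℕ) + 1) - lam k X (j : ℕ) else 0) := by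
      intro Y
      rw [Finset.sum_ite_mem, Finset.univ_inter, Lam]
    rw [hA]
    calc ∑ Y : Finset (Fin n), x Y * Lam k X Y
        = ∑ Y : Finset (Fin n), ∑ j : Fin n,
            x Y * (if j ∈ Y then lam k X ((j : ℕ) + 1) - lam k X (j : ℕ) else 0) := by
          refine Finset.sum_congr rfl fun Y _ => ?_
          rw [hLam Y, Finset.mul_sum]
      _ = ∑ j : Fin n, ∑ Y : Finset (Fin n),
            x Y * (if j ∈ Y then lam k X ((j : ℕ) + 1) - lam k X (j : ℕ) else 0) :=
          Finset.sum_comm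
      _ = ∑ j : Fin n, (lam k X ((j : ℕ) + 1) - lam k X (j : ℕ)) * w j := by
          refine Finset.sum_congr rfl fun j _ => ?_
          have h1 : ∀ Y : Finset (Fin n),
              x Y * (if j ∈ Y then lam k X ((j : ℕ) + 1) - lam k X (j : ℕ) else 0) =
              (x Y * (if j ∈ Y then 1 else 0)) * (lam k X ((j : ℕ) + 1) - lam k X (j : ℕ)) := by
            intro Y; split_ifs <;> ring
          rw [Finset.sum_congr rfl fun Y _ => h1 Y, ← Finset.sum_mul, hx_feas j, mul_comm]
  -- Step 2 : that sum is nonnegative (Abel summation + monotonicity of w)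
  have hA2 : 0 ≤ A := by
    rw [hA1]
    set W : ℕ → ℝ := fun i => if h : i < n then w ⟨i, h⟩ else 0 with hW
    have hWmono : ∀ i : ℕ, W (i + 1) ≤ W i := by
      intro i
      simp only [hW]
      by_cases h1 : i + 1 < n
      · rw [dif_pos h1, dif_pos (by omega : i < n)]
        exact hw_mono ⟨i, by omega⟩ ⟨i + 1, h1⟩ (by simp [Fin.le_def])
      · rw [dif_neg h1]
        by_cases h2 : i < n
        · rw [dif_pos h2]; exact hw_nonneg _
        · rw [dif_neg h2]
    have hconv : ∑ j : Fin n, (lam k X ((j : ℕ) + 1) - lam k X (j : ℕ)) * w j =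
        ∑ i ∈ Finset.range n, (lam k X (i + 1) - lam k X i) * W i := by
      rw [← Fin.sum_univ_eq_sum_range (fun i => (lam k X (i + 1) - lam k X i) * W i) n]
      refine Finset.sum_congr rfl fun j _ => ?_
      simp only [hW, j.isLt, dif_pos, Fin.eta]
    rw [hconv]
    have hident : ∀ i : ℕ, (lam k X (i + 1) - lam k X i) * W i =
        lam k X (i + 1) * (W i - W (i + 1)) +
        (lam k X (i + 1) * W (i + 1) - lam k X i * W i) := by
      intro i; ring
    rw [Finset.sum_congr rfl fun i _ => hident i, Finset.sum_add_distrib,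
      Finset.sum_range_sub (fun i => lam k X i * W i), lam_zero, lam_top]
    have h1 : 0 ≤ ∑ i ∈ Finset.range n, lam k X (i + 1) * (W i - W (i + 1)) :=
      Finset.sum_nonneg fun i hi =>
        mul_nonneg (lam_nonneg hk2 hbad (Finset.mem_range.1 hi))
          (by linarith [hWmono i])
    simp only [zero_mul, mul_zero, sub_zero]
    linarith
  -- Step 3 : A < 0
  have hA3 : A < 0 := by
    have hsplit : A = x X * Lam k X X +
        ∑ Y ∈ Finset.univ.erase X, x Y * Lam k X Y := by
      rw [hA, ← Finset.add_sum_erase _ _ (Finset.mem_univ X)]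
    have hrest : ∑ Y ∈ Finset.univ.erase X, x Y * Lam k X Y ≤ 0 := by
      refine Finset.sum_nonpos fun Y _ => ?_
      rcases eq_or_lt_of_le (hx_nonneg Y) with h | h
      · rw [← h, zero_mul]
      · have hLamY : Lam k X Y ≤ 0 := by
          rcases hcompat Y h with h1 | h1 | h1
          · exact Lam_subset hk2 hbad h1
          · exact Lam_superset hk2 hbad h1
          · exact Lam_close hk2 hbad h1
        calc x Y * Lam k X Y ≤ x Y * 0 := mul_le_mul_of_nonneg_left hLamY (le_of_lt h)
          _ = 0 := mul_zero _
    have hself : x X * Lam k X X ≤ -x X := by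
      calc x X * Lam k X X ≤ x X * (-1) :=
            mul_le_mul_of_nonneg_left (Lam_self hk2 hbad) (le_of_lt hX)
        _ = -x X := by ring
    rw [hsplit]
    linarith
  linarith

end DSAux

open DSAux in
theorem stmt_2 (n k : ℕ) (hk2 : 2 ≤ k) (hkn : k ≤ n)
    (f : Finset (Fin n) → ℝ) (hf : DistantSubmodular k f) (hf0 : f ∅ = 0)
    (w : Fin n → ℝ) (hw_nonneg : ∀ s : Fin n, 0 ≤ w s)
    (hw_mono : ∀ i j : Fin n, i ≤ j → w j ≤ w i)
    (C : Set (Finset (Fin n)))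
    (hC : C = {U | ∃ i ≤ n, ∃ T : Finset (Fin n), T.card ≤ k - 2 ∧ U = initSeg n i ∆ T})
    (y : Finset (Fin n) → ℝ) (hy_nonneg : ∀ T, 0 ≤ y T)
    (hy_feas : ∀ s : Fin n, ∑ T : Finset (Fin n), y T * (if s ∈ T then 1 else 0) = w s) :
    ∃ y' : Finset (Fin n) → ℝ,
      (∀ T, 0 ≤ y' T) ∧
      (∀ s : Fin n, ∑ T : Finset (Fin n), y' T * (if s ∈ T then 1 else 0) = w s) ∧
      (∀ T, 0 < y' T → T ∈ C) ∧
      ∑ T : Finset (Fin n), y' T * f T ≤ ∑ T : Finset (Fin n), y T * f T := by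
  classical
  subst hC
  -- the feasible region with cost at most cost y and no mass on ∅
  set K : Set (Finset (Fin n) → ℝ) :=
    {z | (∀ T, 0 ≤ z T) ∧
      (∀ s : Fin n, ∑ T : Finset (Fin n), z T * (if s ∈ T then 1 else 0) = w s) ∧
      z ∅ = 0 ∧
      ∑ T : Finset (Fin n), z T * f T ≤ ∑ T : Finset (Fin n), y T * f T} with hK
  -- K is nonempty
  have hKne : K.Nonempty := by
    refine ⟨Function.update y ∅ 0, fun T => ?_, fun s => ?_, Function.update_self _ _ _, ?_⟩
    · rcases eq_or_ne T ∅ with rfl | hT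
      · rw [Function.update_self]
      · rw [Function.update_of_ne hT]; exact hy_nonneg T
    · rw [← hy_feas s]
      refine Finset.sum_congr rfl fun T _ => ?_
      rcases eq_or_ne T ∅ with rfl | hT
      · simp
      · rw [Function.update_of_ne hT]
    · refine le_of_eq (Finset.sum_congr rfl fun T _ => ?_)
      rcases eq_or_ne T ∅ with rfl | hT
      · rw [Function.update_self, hf0, mul_zero, mul_zero]
      · rw [Function.update_of_ne hT]
  -- K is closed
  have hKclosed : IsClosed K := by
    have h1 : IsClosed {z : Finset (Fin n) → ℝ | ∀ T, 0 ≤ z T} := by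
      have : {z : Finset (Fin n) → ℝ | ∀ T, 0 ≤ z T} =
          ⋂ T : Finset (Fin n), {z | 0 ≤ z T} := by
        ext z; simp [Set.mem_iInter]
      rw [this]
      exact isClosed_iInter fun T => isClosed_le continuous_const (continuous_apply T)
    have h2 : IsClosed {z : Finset (Fin n) → ℝ |
        ∀ s : Fin n, ∑ T : Finset (Fin n), z T * (if s ∈ T then 1 else 0) = w s} := by
      have : {z : Finset (Fin n) → ℝ |
          ∀ s : Fin n, ∑ T : Finset (Fin n), z T * (if s ∈ T then 1 else 0) = w s} =
          ⋂ s : Fin n, {z | ∑ T : Finset (Fin n), z T * (if s ∈ T then 1 else 0) = w s} := by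
        ext z; simp [Set.mem_iInter]
      rw [this]
      refine isClosed_iInter fun s => isClosed_eq ?_ continuous_const
      exact continuous_finset_sum _ fun T _ => (continuous_apply T).mul continuous_const
    have h3 : IsClosed {z : Finset (Fin n) → ℝ | z ∅ = 0} :=
      isClosed_eq (continuous_apply ∅) continuous_const
    have h4 : IsClosed {z : Finset (Fin n) → ℝ |
        ∑ T : Finset (Fin n), z T * f T ≤ ∑ T : Finset (Fin n), y T * f T} := by
      refine isClosed_le ?_ continuous_const
      exact continuous_finset_sum _ fun T _ => (continuous_apply T).mul continuous_const
    have : K = {z : Finset (Fin n) → ℝ | ∀ T, 0 ≤ z T} ∩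
        ({z | ∀ s : Fin n, ∑ T : Finset (Fin n), z T * (if s ∈ T then 1 else 0) = w s} ∩
        ({z | z ∅ = 0} ∩
        {z | ∑ T : Finset (Fin n), z T * f T ≤ ∑ T : Finset (Fin n), y T * f T})) := by
      ext z
      simp only [hK, Set.mem_setOf_eq, Set.mem_inter_iff]
      try tauto
    rw [this]
    exact h1.inter (h2.inter (h3.inter h4))
  -- K is bounded
  have hKbounded : Bornology.IsBounded K := by
    rw [isBounded_iff_forall_norm_le]
    refine ⟨∑ s : Fin n, w s, fun z hz => ?_⟩
    obtain ⟨hz1, hz2, hz3, _⟩ := hz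
    have hR0 : (0 : ℝ) ≤ ∑ s : Fin n, w s := Finset.sum_nonneg fun s _ => hw_nonneg s
    rw [pi_norm_le_iff_of_nonneg hR0]
    intro T
    rw [Real.norm_eq_abs, abs_of_nonneg (hz1 T)]
    rcases eq_or_ne T ∅ with rfl | hT
    · rw [hz3]; exact hR0
    · obtain ⟨s, hs⟩ := Finset.nonempty_iff_ne_empty.2 hT
      have hzT : z T ≤ w s := by
        rw [← hz2 s]
        have h0 : ∀ U : Finset (Fin n), U ∈ Finset.univ →
            0 ≤ z U * (if s ∈ U then 1 else 0) := fun U _ =>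
          mul_nonneg (hz1 U) (by split_ifs <;> norm_num)
        have := Finset.single_le_sum h0 (Finset.mem_univ T)
        rwa [if_pos hs, mul_one] at this
      exact hzT.trans (Finset.single_le_sum (fun i _ => hw_nonneg i) (Finset.mem_univ s))
  have hKco : IsCompact K := Metric.isCompact_of_isClosed_isBounded hKclosed hKbounded
  -- maximize Phi over K
  set Phi : (Finset (Fin n) → ℝ) → ℝ :=
    fun z => ∑ T : Finset (Fin n), z T * ((T.card : ℝ)) ^ 2 with hPhi
  have hPhiCont : Continuous Phi :=
    continuous_finset_sum _ fun T _ => (continuous_apply T).mul continuous_const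
  obtain ⟨x, hxK, hxmax⟩ := hKco.exists_isMaxOn hKne hPhiCont.continuousOn
  obtain ⟨hx_nonneg, hx_feas, hx_empty, hx_cost⟩ := hxK
  -- uncrossing : the support of x is laminar-up-to-(k-1)
  have hcompat : ∀ X Y : Finset (Fin n), 0 < x X → 0 < x Y →
      X ⊆ Y ∨ Y ⊆ X ∨ (X ∆ Y).card ≤ k - 1 := by
    intro X Y hX hY
    by_contra hcon
    push_neg at hcon
    obtain ⟨hnXY, hnYX, hcard⟩ := hcon
    have hksd : k ≤ (X ∆ Y).card := by omega
    have hXY : X ≠ Y := fun h => hnXY (h ▸ subset_rfl)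
    set ε : ℝ := min (x X) (x Y) with hε
    have hεpos : 0 < ε := lt_min hX hY
    set e : Finset (Fin n) → ℝ := fun T =>
      (if T = X ∪ Y then ε else 0) + (if X ∩ Y ≠ ∅ ∧ T = X ∩ Y then ε else 0) -
      (if T = X then ε else 0) - (if T = Y then ε else 0) with he
    set z : Finset (Fin n) → ℝ := fun T => x T + e T with hz
    -- sums against any function vanishing on ∅
    have hsum_e : ∀ g : Finset (Fin n) → ℝ, g ∅ = 0 →
        ∑ T : Finset (Fin n), e T * g T =
        ε * (g (X ∪ Y) + g (X ∩ Y) - g X - g Y) := by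
      intro g hg0
      by_cases hI : X ∩ Y = ∅
      · have expand : ∀ T : Finset (Fin n), e T * g T =
            (if T = X ∪ Y then ε * g T else 0) - (if T = X then ε * g T else 0) -
            (if T = Y then ε * g T else 0) := by
          intro T
          simp only [he, hI, ne_eq, not_true_eq_false, false_and, if_false]
          split_ifs <;> ring
        rw [Finset.sum_congr rfl fun T _ => expand T]
        simp only [Finset.sum_sub_distrib]
        rw [Finset.sum_ite_eq' Finset.univ (X ∪ Y) (fun T => ε * g T),
          Finset.sum_ite_eq' Finset.univ X (fun T => ε * g T),
          Finset.sum_ite_eq' Finset.univ Y (fun T => ε * g T)]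
        simp only [Finset.mem_univ, if_true]
        rw [hI, hg0]
        ring
      · have expand : ∀ T : Finset (Fin n), e T * g T =
            (if T = X ∪ Y then ε * g T else 0) + (if T = X ∩ Y then ε * g T else 0) -
            (if T = X then ε * g T else 0) - (if T = Y then ε * g T else 0) := by
          intro T
          simp only [he, hI, ne_eq, not_false_eq_true, true_and]
          split_ifs <;> ring
        rw [Finset.sum_congr rfl fun T _ => expand T]
        simp only [Finset.sum_sub_distrib, Finset.sum_add_distrib]
        rw [Finset.sum_ite_eq' Finset.univ (X ∪ Y) (fun T => ε * g T),
          Finset.sum_ite_eq' Finset.univ (X ∩ Y) (fun T => ε * g T),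
          Finset.sum_ite_eq' Finset.univ X (fun T => ε * g T),
          Finset.sum_ite_eq' Finset.univ Y (fun T => ε * g T)]
        simp only [Finset.mem_univ, if_true]
        ring
    -- z is in K
    have hXne : X ≠ ∅ := by
      rintro rfl; rw [hx_empty] at hX; exact lt_irrefl 0 hX
    have hYne : Y ≠ ∅ := by
      rintro rfl; rw [hx_empty] at hY; exact lt_irrefl 0 hY
    have hXneU : X ≠ X ∪ Y := fun h => hnYX (Finset.union_eq_left.mp h.symm)
    have hYneU : Y ≠ X ∪ Y := fun h => hnXY (Finset.union_eq_right.mp h.symm)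
    have hXneI : X ≠ X ∩ Y := fun h => hnXY (Finset.inter_eq_left.mp h.symm)
    have hYneI : Y ≠ X ∩ Y := fun h => hnYX (Finset.inter_eq_right.mp h.symm)
    have hz_nonneg : ∀ T, 0 ≤ z T := by
      intro T
      rcases eq_or_ne T X with rfl | hTX
      · have : z T = x T - ε := by
          simp only [hz, he]
          rw [if_neg hXneU, if_neg (fun h : _ ∧ _ => hXneI h.2), if_neg hXY, if_true]
          ring
        rw [this]
        have : ε ≤ x T := min_le_left _ _
        linarith
      · rcases eq_or_ne T Y with rfl | hTY
        · have : z T = x T - ε := by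
            simp only [hz, he]
            rw [if_neg hYneU, if_neg (fun h : _ ∧ _ => hYneI h.2), if_neg (Ne.symm hXY),
              if_true]
            ring
          rw [this]
          have : ε ≤ x T := min_le_right _ _
          linarith
        · have : z T = x T + ((if T = X ∪ Y then ε else 0) +
              (if X ∩ Y ≠ ∅ ∧ T = X ∩ Y then ε else 0)) := by
            simp only [hz, he]
            rw [if_neg hTX, if_neg hTY]
            ring
          rw [this]
          have h1 : (0:ℝ) ≤ (if T = X ∪ Y then ε else 0) := by split_ifs <;> linarith
          have h2 : (0:ℝ) ≤ (if X ∩ Y ≠ ∅ ∧ T = X ∩ Y then ε else 0) := by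
            split_ifs <;> linarith
          have := hx_nonneg T
          linarith
    have hz_empty : z ∅ = 0 := by
      simp only [hz, he]
      rw [if_neg (show (∅ : Finset (Fin n)) ≠ X ∪ Y from
          fun h => hXne (Finset.union_eq_empty.mp h.symm).1),
        if_neg (show ¬(X ∩ Y ≠ ∅ ∧ (∅ : Finset (Fin n)) = X ∩ Y) from fun h => h.1 h.2.symm),
        if_neg (Ne.symm hXne), if_neg (Ne.symm hYne), hx_empty]
      ring
    have hz_feas : ∀ s : Fin n, ∑ T : Finset (Fin n), z T * (if s ∈ T then 1 else 0) = w s := by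
      intro s
      have hsplit : ∑ T : Finset (Fin n), z T * (if s ∈ T then 1 else 0) =
          (∑ T : Finset (Fin n), x T * (if s ∈ T then 1 else 0)) +
          ∑ T : Finset (Fin n), e T * (if s ∈ T then 1 else 0) := by
        rw [← Finset.sum_add_distrib]
        refine Finset.sum_congr rfl fun T _ => ?_
        simp only [hz]; ring
      rw [hsplit, hx_feas s, hsum_e _ (by simp)]
      have : (if s ∈ X ∪ Y then (1:ℝ) else 0) + (if s ∈ X ∩ Y then (1:ℝ) else 0) -
          (if s ∈ X then (1:ℝ) else 0) - (if s ∈ Y then (1:ℝ) else 0) = 0 := by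
        by_cases hsX : s ∈ X <;> by_cases hsY : s ∈ Y <;>
          simp [Finset.mem_union, Finset.mem_inter, hsX, hsY]
      rw [this, mul_zero, add_zero]
    have hz_cost : ∑ T : Finset (Fin n), z T * f T ≤ ∑ T : Finset (Fin n), y T * f T := by
      have hsplit : ∑ T : Finset (Fin n), z T * f T =
          (∑ T : Finset (Fin n), x T * f T) + ∑ T : Finset (Fin n), e T * f T := by
        rw [← Finset.sum_add_distrib]
        refine Finset.sum_congr rfl fun T _ => ?_
        simp only [hz]; ring
      rw [hsplit, hsum_e f hf0]
      have hsub := hf X Y hksd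
      have : ε * (f (X ∪ Y) + f (X ∩ Y) - f X - f Y) ≤ 0 :=
        mul_nonpos_of_nonneg_of_nonpos (le_of_lt hεpos) (by linarith)
      linarith
    have hzK : z ∈ K := ⟨hz_nonneg, hz_feas, hz_empty, hz_cost⟩
    -- Phi strictly increases : contradiction
    have hPhival : Phi z = Phi x + ε * (((X ∪ Y).card : ℝ) ^ 2 + ((X ∩ Y).card : ℝ) ^ 2 -
        (X.card : ℝ) ^ 2 - (Y.card : ℝ) ^ 2) := by
      simp only [hPhi]
      have hsplit : ∑ T : Finset (Fin n), z T * ((T.card : ℝ)) ^ 2 =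
          (∑ T : Finset (Fin n), x T * ((T.card : ℝ)) ^ 2) +
          ∑ T : Finset (Fin n), e T * ((T.card : ℝ)) ^ 2 := by
        rw [← Finset.sum_add_distrib]
        refine Finset.sum_congr rfl fun T _ => ?_
        simp only [hz]; ring
      rw [hsplit, hsum_e _ (by simp)]
    have hquad : (X.card : ℝ) ^ 2 + (Y.card : ℝ) ^ 2 <
        ((X ∪ Y).card : ℝ) ^ 2 + ((X ∩ Y).card : ℝ) ^ 2 := by
      have hssX : X ⊂ X ∪ Y :=
        ⟨Finset.subset_union_left, fun hc => hnYX fun t ht => hc (Finset.subset_union_right ht)⟩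
      have hssY : Y ⊂ X ∪ Y :=
        ⟨Finset.subset_union_right, fun hc => hnXY fun t ht => hc (Finset.subset_union_left ht)⟩
      have ha : (X.card : ℝ) < ((X ∪ Y).card : ℝ) := by
        exact_mod_cast Finset.card_lt_card hssX
      have hb : (Y.card : ℝ) < ((X ∪ Y).card : ℝ) := by
        exact_mod_cast Finset.card_lt_card hssY
      have huv : ((X ∪ Y).card : ℝ) + ((X ∩ Y).card : ℝ) = (X.card : ℝ) + (Y.card : ℝ) := by
        exact_mod_cast Finset.card_union_add_card_inter X Y
      nlinarith [mul_pos (by linarith : (0:ℝ) < ((X ∪ Y).card : ℝ) - (X.card : ℝ))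
        (by linarith : (0:ℝ) < ((X ∪ Y).card : ℝ) - (Y.card : ℝ))]
    have : Phi x < Phi z := by
      rw [hPhival]
      have : 0 < ε * (((X ∪ Y).card : ℝ) ^ 2 + ((X ∩ Y).card : ℝ) ^ 2 -
          (X.card : ℝ) ^ 2 - (Y.card : ℝ) ^ 2) := mul_pos hεpos (by linarith)
      linarith
    exact absurd (hxmax hzK) (not_le.2 this)
  -- conclude via the structure lemma
  refine ⟨x, hx_nonneg, hx_feas, ?_, hx_cost⟩
  intro T hT
  obtain ⟨i, hin, hcard⟩ := support_good hk2 w hw_nonneg hw_mono x hx_nonneg hx_feas T hT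
    (fun Y hY => by
      rcases hcompat T Y hT hY with h | h | h
      · exact Or.inr (Or.inl h)
      · exact Or.inl h
      · exact Or.inr (Or.inr h))
  exact ⟨i, hin, initSeg n i ∆ T, by rwa [symmDiff_comm],
    (symmDiff_symmDiff_cancel_left _ _).symm⟩
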